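/- (Milnor–Schwarz Lemma, Rosendal form) Let G be a topological group acting continuously, coboundedly, and by isometries on a geodesic metric space X, and suppose the action is metrically coarsely proper: for each R > 0 and x ∈ X, the set {g ∈ G : (g · B_R(x)) ∩ B_R(x) ≠ ∅} is coarsely bounded in G. Fix x ∈ X and define d_{X,x}(g, h) = d_X(g·x, h·x). Then d_{X,x} is a continuous left-invariant pseudometric on G, and for every continuous left-invariant pseudometric d' on G there exist L > 0 and K ≥ 0 with d'(g, h) ≤ L · d_{X,x}(g, h) + K for all g, h ∈ G; i.e., d_{X,x} is a maximum element of the poset of continuous left-invariant pseudometrics on G, so G admits the geometry of X. -/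

import Mathlib

open Pointwise

lemma ms_chain {G X : Type*} [Group G] [MetricSpace X] [MulAction G X]
    (hiso : ∀ (g : G) (a b : X), dist (g • a) (g • b) = dist a b)
    (hgeo : ∀ a b : X, ∃ γ : ℝ → X, γ 0 = a ∧ γ (dist a b) = b ∧
      ∀ s ∈ Set.Icc (0 : ℝ) (dist a b), ∀ t ∈ Set.Icc (0 : ℝ) (dist a b),
        dist (γ s) (γ t) = |s - t|)
    (x : X) (R M : ℝ) (hR : 0 < R) (hM : 0 ≤ M)
    (hcob : ∀ y : X, ∃ g : G, dist y (g • x) < R)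
    (d' : G → G → ℝ)
    (htri : ∀ a b c : G, d' a c ≤ d' a b + d' b c)
    (hli : ∀ g a b : G, d' (g * a) (g * b) = d' a b)
    (hS : ∀ s : G, dist x (s • x) < 3 * R → d' 1 s ≤ M) :
    ∀ n : ℕ, ∀ g : G, dist x (g • x) ≤ 2 * R + n * R → d' 1 g ≤ (n + 1) * M := by
  intro n
  induction n with
  | zero =>
    intro g hg
    simpa using hS g (by push_cast at hg ⊢; linarith)
  | succ n ih =>
    intro g hg
    by_cases hcase : dist x (g • x) ≤ 2 * R + n * R
    · have := ih g hcase
      have : (n + 1 : ℝ) * M ≤ (n + 1 + 1) * M := by nlinarith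
      push_cast
      push_cast at ih
      linarith [ih g hcase]
    · push_neg at hcase
      set D := dist x (g • x) with hD
      have hD0 : 0 ≤ D := dist_nonneg
      have hD2R : 2 * R < D := by
        have : (0:ℝ) ≤ (n:ℝ) * R := by positivity
        linarith
      obtain ⟨γ, hγ0, hγD, hγiso⟩ := hgeo x (g • x)
      set y := γ (D - 2 * R) with hy
      have hmem1 : (0:ℝ) ∈ Set.Icc (0:ℝ) D := ⟨le_refl _, hD0⟩
      have hmem2 : D - 2 * R ∈ Set.Icc (0:ℝ) D := ⟨by linarith, by linarith⟩
      have hmem3 : D ∈ Set.Icc (0:ℝ) D := ⟨hD0, le_refl _⟩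
      have hxy : dist x y = D - 2 * R := by
        have := hγiso 0 hmem1 (D - 2 * R) hmem2
        rw [hγ0] at this
        rw [this]
        rw [abs_of_nonpos (by linarith)]
        ring
      have hyg : dist y (g • x) = 2 * R := by
        have := hγiso (D - 2 * R) hmem2 D hmem3
        rw [hγD] at this
        rw [this, abs_of_nonpos (by linarith)]
        ring
      obtain ⟨h, hh⟩ := hcob y
      have hxh : dist x (h • x) ≤ 2 * R + n * R := by
        have := dist_triangle x y (h • x)
        push_cast at hg
        linarith
      have ihh := ih h hxh
      have hsg : h * (h⁻¹ * g) = g := by group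
      have hstep : dist x ((h⁻¹ * g) • x) < 3 * R := by
        have e : dist x ((h⁻¹ * g) • x) = dist (h • x) (g • x) := by
          rw [← hiso h, smul_smul, hsg]
        rw [e]
        have := dist_triangle (h • x) y (g • x)
        rw [dist_comm (h • x) y] at this
        linarith
      have hs := hS _ hstep
      have : d' 1 g ≤ d' 1 h + d' h g := htri 1 h g
      have e2 : d' h g = d' 1 (h⁻¹ * g) := by
        conv_lhs => rw [← mul_one h, ← hsg]
        rw [hli]
      push_cast
      push_cast at ihh
      rw [e2] at this
      linarith

/-- A continuous, left-invariant pseudometric on a topological group `G`. -/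
structure IsContLeftInvPseudometric (G : Type*) [Group G] [TopologicalSpace G]
    (d : G → G → ℝ) : Prop where
  continuous : Continuous fun p : G × G => d p.1 p.2
  self : ∀ x : G, d x x = 0
  symm : ∀ x y : G, d x y = d y x
  nonneg : ∀ x y : G, 0 ≤ d x y
  triangle : ∀ x y z : G, d x z ≤ d x y + d y z
  left_inv : ∀ g x y : G, d (g * x) (g * y) = d x y

/-- A subset `A` of a topological group `G` is coarsely bounded in `G` if it has
finite diameter with respect to every continuous left-invariant pseudometric on `G`. -/
def IsCoarselyBounded (G : Type*) [Group G] [TopologicalSpace G] (A : Set G) : Prop :=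
  ∀ d : G → G → ℝ, IsContLeftInvPseudometric G d →
    ∃ M : ℝ, ∀ a ∈ A, ∀ b ∈ A, d a b ≤ M

/-- The word length of `g` with respect to a generating set `S`: the least `n` such
that `g` is a product of `n` elements of `S`. -/
noncomputable def wordLength {G : Type*} [Group G] (S : Set G) (g : G) : ℕ :=
  sInf {n : ℕ | ∃ l : List G, l.length = n ∧ (∀ s ∈ l, s ∈ S) ∧ l.prod = g}

/-- `G` admits a geometry if there is a continuous left-invariant pseudometric on `G`
which dominates, in the coarse Lipschitz sense, every continuous left-invariant
pseudometric on `G`. -/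
def AdmitsAGeometry (G : Type*) [Group G] [TopologicalSpace G] : Prop :=
  ∃ d : G → G → ℝ, IsContLeftInvPseudometric G d ∧
    ∀ d' : G → G → ℝ, IsContLeftInvPseudometric G d' →
      ∃ L K : ℝ, 0 < L ∧ 0 ≤ K ∧ ∀ g h : G, d' g h ≤ L * d g h + K

/-- The Milnor–Schwarz Lemma, Rosendal form: if a topological group `G` acts
continuously, coboundedly, metrically coarsely properly and by isometries on a
geodesic metric space `X`, then for any `x ∈ X` the orbit pseudometric
`(g, h) ↦ dist (g • x) (h • x)` is a continuous left-invariant pseudometric on `G`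
which dominates every continuous left-invariant pseudometric on `G` up to constants;
i.e. `G` admits the geometry of `X`. -/
theorem milnor_schwarz_rosendal {G X : Type*} [Group G] [TopologicalSpace G]
    [IsTopologicalGroup G] [MetricSpace X] [MulAction G X]
    (hcont : Continuous fun p : G × X => p.1 • p.2)
    (hiso : ∀ (g : G) (a b : X), dist (g • a) (g • b) = dist a b)
    (hgeo : ∀ a b : X, ∃ γ : ℝ → X, γ 0 = a ∧ γ (dist a b) = b ∧
      ∀ s ∈ Set.Icc (0 : ℝ) (dist a b), ∀ t ∈ Set.Icc (0 : ℝ) (dist a b),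
        dist (γ s) (γ t) = |s - t|)
    (hcobdd : ∃ (x₀ : X) (R : ℝ), 0 < R ∧ ∀ y : X, ∃ g : G, y ∈ g • Metric.ball x₀ R)
    (hproper : ∀ R : ℝ, 0 < R → ∀ y : X,
      IsCoarselyBounded G {g : G | (g • Metric.ball y R ∩ Metric.ball y R).Nonempty})
    (x : X) :
    IsContLeftInvPseudometric G (fun g h => dist (g • x) (h • x)) ∧
      ∀ d' : G → G → ℝ, IsContLeftInvPseudometric G d' →
        ∃ L K : ℝ, 0 < L ∧ 0 ≤ K ∧
          ∀ g h : G, d' g h ≤ L * dist (g • x) (h • x) + K := by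
  constructor
  · refine ⟨?_, ?_, ?_, ?_, ?_, ?_⟩
    · exact (hcont.comp (continuous_fst.prodMk continuous_const)).dist
        (hcont.comp (continuous_snd.prodMk continuous_const))
    · intro g; simp
    · intro g h; exact dist_comm _ _
    · intro g h; exact dist_nonneg
    · intro a b c; exact dist_triangle _ _ _
    · intro g a b; rw [mul_smul, mul_smul]; exact hiso g _ _
  · intro d' hd'
    -- coboundedness with respect to the orbit of x
    obtain ⟨x₀, R₀, hR₀, hcb⟩ := hcobdd
    set R : ℝ := R₀ + dist x₀ x with hRdef
    have hR : 0 < R := by have := dist_nonneg (x := x₀) (y := x); linarith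
    have hcob : ∀ y : X, ∃ g : G, dist y (g • x) < R := by
      intro y
      obtain ⟨g, hg⟩ := hcb y
      obtain ⟨z, hz, hgz⟩ := hg
      refine ⟨g, ?_⟩
      have : dist y (g • x) = dist z x := by rw [← hgz, hiso]
      rw [this]
      calc dist z x ≤ dist z x₀ + dist x₀ x := dist_triangle _ _ _
        _ < R := by rw [hRdef]; have := Metric.mem_ball.mp hz; linarith
    -- the "generating set" is coarsely bounded
    have hprop := hproper (3 * R) (by linarith) x d' hd'
    obtain ⟨M₀, hM₀⟩ := hprop
    set M : ℝ := max M₀ 0 with hMdef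
    have hM : 0 ≤ M := le_max_right _ _
    have hone : (1 : G) ∈ {g : G | (g • Metric.ball x (3 * R) ∩
        Metric.ball x (3 * R)).Nonempty} := by
      refine ⟨x, ?_, Metric.mem_ball_self (by linarith)⟩
      rw [one_smul]
      exact Metric.mem_ball_self (by linarith)
    have hS : ∀ s : G, dist x (s • x) < 3 * R → d' 1 s ≤ M := by
      intro s hs
      have hmem : s ∈ {g : G | (g • Metric.ball x (3 * R) ∩
          Metric.ball x (3 * R)).Nonempty} := by
        refine ⟨s • x, ?_, ?_⟩
        · exact Set.smul_mem_smul_set (Metric.mem_ball_self (by linarith))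
        · rw [Metric.mem_ball, dist_comm]; exact hs
      exact le_trans (hM₀ 1 hone s hmem) (le_max_left _ _)
    have key := ms_chain hiso hgeo x R M hR hM hcob d' hd'.triangle hd'.left_inv hS
    refine ⟨M / R + 1, 2 * M, by positivity, by linarith, ?_⟩
    intro g h
    set D : ℝ := dist (g • x) (h • x) with hDdef
    have hD0 : 0 ≤ D := dist_nonneg
    have hdist : dist x ((g⁻¹ * h) • x) = D := by
      rw [← hiso g, smul_smul, mul_inv_cancel_left]
    set n : ℕ := ⌈D / R⌉₊ with hndef
    have hn1 : D ≤ n * R := (div_le_iff₀ hR).mp (Nat.le_ceil _)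
    have hn2 : (n : ℝ) < D / R + 1 := Nat.ceil_lt_add_one (by positivity)
    have hb := key n (g⁻¹ * h) (by rw [hdist]; linarith)
    have e : d' g h = d' 1 (g⁻¹ * h) := by
      conv_lhs => rw [← mul_one g, ← mul_inv_cancel_left g h]
      rw [hd'.left_inv]
    rw [e]
    have h1 : ((n : ℝ) + 1) * M ≤ (D / R + 2) * M := by nlinarith
    have h2 : (D / R + 2) * M = M / R * D + 2 * M := by field_simp
    have h3 : M / R * D ≤ (M / R + 1) * D := by nlinarith
    linarith
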